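/- arXiv:2106.11213 — 4 statements merged into one kernel-verified Lean document; each statement's English description precedes it below -/
import Mathlib

section
/- Let X be an n×p totally unimodular matrix with n ≥ p. Define the robustness r(X) = (number of p-element row subsets S with det(X_S) ≠ 0) / C(n,p). Then r(X) = det(XᵀX) / C(n,p). In particular, among totally unimodular n×p matrices, maximizing det(XᵀX) is equivalent to maximizing robustness. -/
open Matrix Finset Equiv Equiv.Perm

variable {R : Type*} [CommRing R]

lemma det_mul_expand {p n : ℕ} (A : Matrix (Fin p) (Fin n) R) (B : Matrix (Fin n) (Fin p) R) :
    (A * B).det = ∑ f : Fin p → Fin n, (∏ i, B (f i) i) * (A.submatrix id f).det := by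
  calc (A * B).det
      = ∑ σ : Perm (Fin p), ∑ f : Fin p → Fin n,
          Perm.sign σ * ∏ i, A (σ i) (f i) * B (f i) i := by
        rw [det_apply']
        refine Finset.sum_congr rfl fun σ _ => ?_
        rw [← Finset.mul_sum]
        congr 1
        simp only [Matrix.mul_apply]
        rw [Finset.prod_univ_sum, Fintype.piFinset_univ]
    _ = ∑ f : Fin p → Fin n, ∑ σ : Perm (Fin p),
          Perm.sign σ * ∏ i, A (σ i) (f i) * B (f i) i := Finset.sum_comm
    _ = ∑ f : Fin p → Fin n, (∏ i, B (f i) i) * (A.submatrix id f).det := by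
        refine Finset.sum_congr rfl fun f _ => ?_
        rw [det_apply', Finset.mul_sum]
        refine Finset.sum_congr rfl fun σ _ => ?_
        simp only [submatrix_apply, id_eq, prod_mul_distrib]
        ring

lemma cauchy_binet {p n : ℕ} (A : Matrix (Fin p) (Fin n) R) (B : Matrix (Fin n) (Fin p) R) :
    (A * B).det = ∑ S : {S : Finset (Fin n) // S.card = p},
      (A.submatrix id (S.1.orderEmbOfFin S.2)).det *
        (B.submatrix (S.1.orderEmbOfFin S.2) id).det := by
  rw [det_mul_expand]
  have h1 : ∑ f : Fin p → Fin n, (∏ i, B (f i) i) * (A.submatrix id f).det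
      = ∑ f ∈ Finset.univ.filter (fun f : Fin p → Fin n => Function.Injective f),
          (∏ i, B (f i) i) * (A.submatrix id f).det := by
    refine (Finset.sum_subset (Finset.filter_subset _ _) fun f _ hf => ?_).symm
    simp only [mem_filter, mem_univ, true_and] at hf
    obtain ⟨i, j, hij, hne⟩ : ∃ i j, f i = f j ∧ i ≠ j := by
      rw [Function.Injective] at hf; push_neg at hf
      obtain ⟨i, j, h1, h2⟩ := hf; exact ⟨i, j, h1, h2⟩
    have : (A.submatrix id f).det = 0 :=
      det_zero_of_column_eq hne (fun k => by simp [hij])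
    simp [this]
  rw [h1]
  have h2 : ∑ S : {S : Finset (Fin n) // S.card = p}, ∑ τ : Perm (Fin p),
        (∏ i, B (S.1.orderEmbOfFin S.2 (τ i)) i) *
          (A.submatrix id (fun i => S.1.orderEmbOfFin S.2 (τ i))).det
      = ∑ f ∈ Finset.univ.filter (fun f : Fin p → Fin n => Function.Injective f),
          (∏ i, B (f i) i) * (A.submatrix id f).det := by
    rw [← Finset.sum_product']
    have hrange : ∀ (S : {S : Finset (Fin n) // S.card = p}) (τ : Perm (Fin p)),
        Set.range (fun i => S.1.orderEmbOfFin S.2 (τ i)) = (S.1 : Set (Fin n)) := by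
      intro S τ
      rw [show (fun i => S.1.orderEmbOfFin S.2 (τ i)) = (S.1.orderEmbOfFin S.2) ∘ τ from rfl,
        τ.surjective.range_comp, Finset.range_orderEmbOfFin]
    refine Finset.sum_bij (fun Sτ _ => fun i => Sτ.1.1.orderEmbOfFin Sτ.1.2 (Sτ.2 i))
      ?_ ?_ ?_ ?_
    · intro Sτ _
      simp only [mem_filter, mem_univ, true_and]
      exact fun a b hab => Sτ.2.injective ((Sτ.1.1.orderEmbOfFin Sτ.1.2).injective hab)
    · -- injectivity
      rintro ⟨S, τ⟩ _ ⟨S', τ'⟩ _ h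
      have hfun : (fun i => S.1.orderEmbOfFin S.2 (τ i))
          = (fun i => S'.1.orderEmbOfFin S'.2 (τ' i)) := h
      have hSS' : S = S' := by
        apply Subtype.ext
        apply Finset.coe_injective
        rw [← hrange S τ, ← hrange S' τ', hfun]
      subst hSS'
      have hττ' : τ = τ' := Equiv.ext fun i =>
        (S.1.orderEmbOfFin S.2).injective (congrFun hfun i)
      rw [hττ']
    · -- surjectivity
      intro f hf
      simp only [mem_filter, mem_univ, true_and] at hf
      have hcard : (Finset.univ.image f).card = p := by
        rw [Finset.card_image_of_injective _ hf, Finset.card_univ, Fintype.card_fin]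
      set S : Finset (Fin n) := Finset.univ.image f with hSdef
      have hmem : ∀ i, f i ∈ S := fun i => Finset.mem_image_of_mem f (Finset.mem_univ i)
      have hτinj : Function.Injective
          (fun i => (S.orderIsoOfFin hcard).symm ⟨f i, hmem i⟩) := by
        intro a b hab
        apply hf
        have := congrArg (S.orderIsoOfFin hcard) hab
        simpa [Subtype.ext_iff] using this
      refine ⟨(⟨⟨S, hcard⟩, Equiv.ofBijective _ (Finite.injective_iff_bijective.1 hτinj)⟩ :
        {S : Finset (Fin n) // S.card = p} × Perm (Fin p)), Finset.mem_univ _, ?_⟩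
      ext i
      simp only [Equiv.ofBijective_apply]
      rw [← Finset.coe_orderIsoOfFin_apply, OrderIso.apply_symm_apply]
    · intro Sτ _
      rfl
  rw [← h2]
  refine Finset.sum_congr rfl fun S _ => ?_
  rw [det_apply' (B.submatrix _ id), Finset.mul_sum]
  refine Finset.sum_congr rfl fun τ _ => ?_
  have : (A.submatrix id fun i => S.1.orderEmbOfFin S.2 (τ i)) =
      (A.submatrix id (S.1.orderEmbOfFin S.2)).submatrix id τ := by
    ext i j; simp
  rw [this, det_permute']
  simp only [submatrix_apply, id_eq]
  ring


/-- A real matrix is totally unimodular if every square submatrix has determinant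
0, 1 or −1. -/
def TotallyUnimodular {n p : ℕ} (X : Matrix (Fin n) (Fin p) ℝ) : Prop :=
  ∀ (k : ℕ) (f : Fin k → Fin n) (g : Fin k → Fin p),
    (X.submatrix f g).det = 0 ∨ (X.submatrix f g).det = 1 ∨ (X.submatrix f g).det = -1

/-- For a totally unimodular n×p matrix X with p ≤ n, the robustness
r(X) = #{p-element row subsets S with det(X_S) ≠ 0} / C(n,p) equals det(XᵀX) / C(n,p);
in particular maximizing det(XᵀX) (D-optimality) is equivalent to maximizing robustness. -/
theorem robustness_eq_det_div_choose (n p : ℕ) (hnp : p ≤ n)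
    (X : Matrix (Fin n) (Fin p) ℝ) (hTU : TotallyUnimodular X) (r : ℝ)
    (hr : r = (Nat.card {S : {S : Finset (Fin n) // S.card = p} //
        (X.submatrix (S.1.orderEmbOfFin S.2) id).det ≠ 0} : ℝ) / (n.choose p : ℝ)) :
    r = (X.transpose * X).det / (n.choose p : ℝ) := by
  have key : (X.transpose * X).det
      = ∑ S : {S : Finset (Fin n) // S.card = p},
          (X.submatrix (S.1.orderEmbOfFin S.2) id).det *
            (X.submatrix (S.1.orderEmbOfFin S.2) id).det := by
    rw [cauchy_binet]
    refine Finset.sum_congr rfl fun S _ => ?_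
    congr 1
    rw [← Matrix.det_transpose (X.submatrix _ id), Matrix.transpose_submatrix]
  have hterm : ∀ S : {S : Finset (Fin n) // S.card = p},
      (X.submatrix (S.1.orderEmbOfFin S.2) id).det *
        (X.submatrix (S.1.orderEmbOfFin S.2) id).det
      = if (X.submatrix (S.1.orderEmbOfFin S.2) id).det ≠ 0 then (1:ℝ) else 0 := by
    intro S
    rcases hTU p (S.1.orderEmbOfFin S.2) id with h | h | h <;> rw [h] <;> norm_num
  have hcount : (Nat.card {S : {S : Finset (Fin n) // S.card = p} //
        (X.submatrix (S.1.orderEmbOfFin S.2) id).det ≠ 0} : ℝ)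
      = (X.transpose * X).det := by
    rw [key, Nat.card_eq_fintype_card, Fintype.card_subtype]
    rw [Finset.sum_congr rfl fun S _ => hterm S, Finset.sum_boole]
  rw [hr, hcount]
end

section
/- Let X be an n×p totally unimodular matrix with n ≥ p, and define D-efficiency D(X) = 100·(det(XᵀX))^{1/p}/n and robustness r(X) as the fraction of nonsingular p×p row-submatrices. Then r(X) = (n·D(X)/100)^p / C(n,p) and D(X) = 100·(C(n,p)·r(X))^{1/p}/n. -/
open Matrix Finset

lemma expand_det (n p : ℕ) (X : Matrix (Fin n) (Fin p) ℝ) :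
    (Xᵀ * X).det = ∑ f : Fin p → Fin n, (∏ i, X (f i) i) * (X.submatrix f id).det := by
  have h1 : (Xᵀ * X) = fun i => ∑ k : Fin n, X k i • (X k) := by
    funext i j
    simp [Matrix.mul_apply, Matrix.transpose_apply, Finset.sum_apply]
  have h2 : (Xᵀ * X).det
      = (Matrix.detRowAlternating (R := ℝ) (n := Fin p)).toMultilinearMap
          (fun i => ∑ k : Fin n, X k i • (X k)) := by
    rw [← h1]; rfl
  rw [h2, MultilinearMap.map_sum]
  refine Finset.sum_congr rfl fun f _ => ?_
  rw [MultilinearMap.map_smul_univ]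
  simp only [smul_eq_mul]
  rfl

lemma toFun_bijective (n p : ℕ) :
    Function.Bijective (fun Sσ : {S : Finset (Fin n) // S.card = p} × Equiv.Perm (Fin p) =>
      (⟨(Sσ.1.1.orderEmbOfFin Sσ.1.2) ∘ Sσ.2,
        (Sσ.1.1.orderEmbOfFin Sσ.1.2).injective.comp Sσ.2.injective⟩ :
        {f : Fin p → Fin n // Function.Injective f})) := by
  constructor
  · rintro ⟨⟨S, hS⟩, σ⟩ ⟨⟨T, hT⟩, τ⟩ h
    simp only [Subtype.mk.injEq] at h
    have h2 : ∀ (U : Finset (Fin n)) (hU : U.card = p) (ρ : Equiv.Perm (Fin p)),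
        Finset.image ((U.orderEmbOfFin hU) ∘ ρ) univ = U := by
      intro U hU ρ
      ext x
      simp only [Finset.mem_image, Function.comp_apply, Finset.mem_univ, true_and]
      constructor
      · rintro ⟨i, rfl⟩; exact U.orderEmbOfFin_mem hU _
      · intro hx
        obtain ⟨i, hi⟩ := Finset.range_orderEmbOfFin U hU ▸ (Finset.mem_coe.2 hx : x ∈ (U : Set (Fin n)))
        exact ⟨ρ.symm i, by simp [hi]⟩
    have himg : S = T := by
      rw [← h2 S hS σ, ← h2 T hT τ, h]
    subst himg
    refine Prod.ext (by simp) ?_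
    refine Equiv.ext fun i => ?_
    exact (S.orderEmbOfFin hS).injective (congrFun h i)
  · rintro ⟨f, hf⟩
    set S : Finset (Fin n) := Finset.image f univ with hSdef
    have hS : S.card = p := by
      rw [hSdef, Finset.card_image_of_injective _ hf, card_univ, Fintype.card_fin]
    have hmem : ∀ i, f i ∈ S := fun i => Finset.mem_image_of_mem f (mem_univ i)
    set g : Fin p → Fin p := fun i => (S.orderIsoOfFin hS).symm ⟨f i, hmem i⟩ with hgdef
    have hg : Function.Injective g := fun a b hab =>
      hf (congrArg Subtype.val ((S.orderIsoOfFin hS).symm.injective hab))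
    refine ⟨(⟨S, hS⟩, Equiv.ofBijective g (Finite.injective_iff_bijective.mp hg)), ?_⟩
    refine Subtype.ext (funext fun i => ?_)
    show S.orderEmbOfFin hS (g i) = f i
    rw [← Finset.coe_orderIsoOfFin_apply, hgdef]
    simp

lemma det_gram_eq_card (n p : ℕ) (X : Matrix (Fin n) (Fin p) ℝ)
    (hTU : TotallyUnimodular X) :
    (Xᵀ * X).det = (Nat.card {S : {S : Finset (Fin n) // S.card = p} //
        (X.submatrix (S.1.orderEmbOfFin S.2) id).det ≠ 0} : ℝ) := by
  classical
  rw [expand_det]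
  set T : (Fin p → Fin n) → ℝ := fun f => (∏ i, X (f i) i) * (X.submatrix f id).det with hT
  have step1 : ∑ f : Fin p → Fin n, T f = ∑ f : {f : Fin p → Fin n // Function.Injective f}, T f.1 := by
    rw [← Finset.sum_subtype (Finset.univ.filter fun f => Function.Injective f)
      (by intro x; simp) T]
    refine (Finset.sum_filter_of_ne fun f _ hTf => ?_).symm
    by_contra hinj
    obtain ⟨i, j, hij, hne⟩ : ∃ i j, f i = f j ∧ i ≠ j := by
      rw [Function.Injective] at hinj
      push_neg at hinj
      exact hinj
    have : (X.submatrix f id).det = 0 :=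
      Matrix.det_zero_of_row_eq hne (by funext k; simp [Matrix.submatrix, hij])
    exact hTf (by rw [hT]; simp [this])
  have step2 : ∑ f : {f : Fin p → Fin n // Function.Injective f}, T f.1
      = ∑ Sσ : {S : Finset (Fin n) // S.card = p} × Equiv.Perm (Fin p),
          T ((Sσ.1.1.orderEmbOfFin Sσ.1.2) ∘ Sσ.2) :=
    (Fintype.sum_bijective _ (toFun_bijective n p) _ _ fun Sσ => rfl).symm
  have step3 : ∀ S : {S : Finset (Fin n) // S.card = p},
      ∑ σ : Equiv.Perm (Fin p), T ((S.1.orderEmbOfFin S.2) ∘ σ)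
        = (X.submatrix (S.1.orderEmbOfFin S.2) id).det ^ 2 := by
    intro S
    set Me := X.submatrix (⇑(S.1.orderEmbOfFin S.2)) id with hMe
    have hsub : ∀ σ : Equiv.Perm (Fin p),
        X.submatrix ((S.1.orderEmbOfFin S.2) ∘ σ) id = Me.submatrix σ id := fun σ => rfl
    have : ∀ σ : Equiv.Perm (Fin p), T ((S.1.orderEmbOfFin S.2) ∘ σ)
        = ((Equiv.Perm.sign σ : ℤ) : ℝ) * (∏ i, Me (σ i) i) * Me.det := by
      intro σ
      have hprod : (∏ i, X (((S.1.orderEmbOfFin S.2) ∘ σ) i) i) = ∏ i, Me (σ i) i := rfl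
      rw [hT]
      simp only [hsub, Matrix.det_permute]
      rw [show ((∏ i, X (((S.1.orderEmbOfFin S.2) ∘ σ) i) i) : ℝ) = ∏ i, Me (σ i) i from rfl]
      ring
    simp only [this, ← Finset.sum_mul]
    rw [sq]
    congr 1
    rw [Matrix.det_apply']
  rw [step1, step2, Fintype.sum_prod_type]
  simp only [step3]
  have hsq : ∀ S : {S : Finset (Fin n) // S.card = p},
      (X.submatrix (⇑(S.1.orderEmbOfFin S.2)) id).det ^ 2
        = if (X.submatrix (⇑(S.1.orderEmbOfFin S.2)) id).det ≠ 0 then (1:ℝ) else 0 := by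
    intro S
    rcases hTU p (⇑(S.1.orderEmbOfFin S.2)) id with h | h | h <;> simp [h]
  simp only [hsq]
  rw [Finset.sum_boole]
  norm_cast
  rw [Nat.card_eq_fintype_card, Fintype.card_subtype]

/-- For a totally unimodular n×p matrix X with 0 < p ≤ n, the D-efficiency
D(X) = 100·det(XᵀX)^{1/p}/n and the robustness r(X) (fraction of nonsingular p×p
row-submatrices) satisfy r = (n·D/100)^p / C(n,p) and D = 100·(C(n,p)·r)^{1/p}/n. -/
theorem robustness_defficiency_relation (n p : ℕ) (hp : 0 < p) (hnp : p ≤ n)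
    (X : Matrix (Fin n) (Fin p) ℝ) (hTU : TotallyUnimodular X) (r D : ℝ)
    (hr : r = (Nat.card {S : {S : Finset (Fin n) // S.card = p} //
        (X.submatrix (S.1.orderEmbOfFin S.2) id).det ≠ 0} : ℝ) / (n.choose p : ℝ))
    (hD : D = 100 * ((X.transpose * X).det ^ ((1 : ℝ) / (p : ℝ))) / (n : ℝ)) :
    r = ((n : ℝ) * D / 100) ^ p / (n.choose p : ℝ) ∧
      D = 100 * (((n.choose p : ℝ) * r) ^ ((1 : ℝ) / (p : ℝ))) / (n : ℝ) := by
  set N := Nat.card {S : {S : Finset (Fin n) // S.card = p} //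
      (X.submatrix (S.1.orderEmbOfFin S.2) id).det ≠ 0} with hNdef
  have hdet : (Xᵀ * X).det = (N : ℝ) := det_gram_eq_card n p X hTU
  have hn : (0:ℝ) < (n:ℝ) := by exact_mod_cast lt_of_lt_of_le hp hnp
  have hC : (0:ℝ) < (n.choose p : ℝ) := by exact_mod_cast Nat.choose_pos hnp
  have hpR : ((p:ℝ)) ≠ 0 := by positivity
  have hN0 : (0:ℝ) ≤ (N:ℝ) := Nat.cast_nonneg N
  have hkey : (n:ℝ) * D / 100 = ((N:ℝ)) ^ ((1:ℝ)/(p:ℝ)) := by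
    rw [hD, hdet]
    field_simp
  have hpow : (((N:ℝ)) ^ ((1:ℝ)/(p:ℝ))) ^ p = (N:ℝ) := by
    rw [← Real.rpow_natCast (((N:ℝ)) ^ ((1:ℝ)/(p:ℝ))) p, ← Real.rpow_mul hN0,
      one_div_mul_cancel hpR, Real.rpow_one]
  have hCr : (n.choose p : ℝ) * r = (N:ℝ) := by
    rw [hr]
    field_simp
  exact ⟨by rw [hr, hkey, hpow], by rw [hD, hdet, hCr]⟩
end

section
/- Let A be a p×K integer matrix of rank p. Every nonzero vector v ∈ ker(A) can be written as a nonnegative rational linear combination of at most K − p circuits of A, each of which is sign-compatible with v (i.e., each circuit u in the decomposition satisfies u_i·v_i ≥ 0 for all i and supp(u) ⊆ supp(v)). -/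
/-- A circuit of an integer matrix A: a nonzero support-minimal integer vector in
ker(A) with coprime entries. -/
def IsCircuit {α β : Type*} [Fintype α] [Fintype β] (A : Matrix α β ℤ) (u : β → ℤ) : Prop :=
  u ≠ 0 ∧ A.mulVec u = 0 ∧ Finset.univ.gcd u = 1 ∧
    ∀ v : β → ℤ, v ≠ 0 → A.mulVec v = 0 →
      (∀ i, v i ≠ 0 → u i ≠ 0) → (∀ i, u i ≠ 0 → v i ≠ 0)

open Finset Module

section Aux

variable {p K : ℕ}

private lemma sign_aux {a b c : ℚ} (h1 : 0 ≤ a * b) (h2 : 0 ≤ b * c) (hb : b ≠ 0) :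
    0 ≤ a * c := by
  nlinarith [mul_nonneg h1 h2, sq_nonneg b, mul_self_pos.2 hb]

private lemma mulVec_cast (A : Matrix (Fin p) (Fin K) ℤ) (z : Fin K → ℤ) :
    (A.map ((↑) : ℤ → ℚ)).mulVec (fun i => (z i : ℚ)) = fun j => ((A.mulVec z) j : ℚ) := by
  funext j
  simp [Matrix.mulVec, Matrix.map, dotProduct]

/-- The subspace of rational kernel vectors of `A` supported inside the support of `v`. -/
def Wsub (A : Matrix (Fin p) (Fin K) ℤ) (v : Fin K → ℚ) : Submodule ℚ (Fin K → ℚ) where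
  carrier := {w | (A.map ((↑) : ℤ → ℚ)).mulVec w = 0 ∧ ∀ i, v i = 0 → w i = 0}
  add_mem' := by
    rintro a b ⟨ha1, ha2⟩ ⟨hb1, hb2⟩
    exact ⟨by rw [Matrix.mulVec_add, ha1, hb1, add_zero],
      fun i hi => by simp [Pi.add_apply, ha2 i hi, hb2 i hi]⟩
  zero_mem' := ⟨Matrix.mulVec_zero _, fun i _ => rfl⟩
  smul_mem' := by
    rintro c a ⟨ha1, ha2⟩
    exact ⟨by rw [Matrix.mulVec_smul, ha1, smul_zero],
      fun i hi => by simp [Pi.smul_apply, ha2 i hi]⟩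

lemma mem_Wsub {A : Matrix (Fin p) (Fin K) ℤ} {v w : Fin K → ℚ} :
    w ∈ Wsub A v ↔ (A.map ((↑) : ℤ → ℚ)).mulVec w = 0 ∧ ∀ i, v i = 0 → w i = 0 :=
  Iff.rfl

lemma exists_conformal_circuit (A : Matrix (Fin p) (Fin K) ℤ) (v : Fin K → ℚ) (hv : v ≠ 0)
    (hker : (A.map ((↑) : ℤ → ℚ)).mulVec v = 0) :
    ∃ u : Fin K → ℤ, IsCircuit A u ∧ (∀ i, 0 ≤ (u i : ℚ) * v i) ∧ (∀ i, v i = 0 → u i = 0) := by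
  classical
  set B := A.map ((↑) : ℤ → ℚ) with hB
  set P : (Fin K → ℚ) → Prop := fun w =>
    w ≠ 0 ∧ B.mulVec w = 0 ∧ (∀ i, 0 ≤ w i * v i) ∧ (∀ i, v i = 0 → w i = 0) with hP
  have hPv : P v := ⟨hv, hker, fun i => mul_self_nonneg _, fun _ h => h⟩
  have hNe : {n : ℕ | ∃ w, P w ∧ (univ.filter fun i => w i ≠ 0).card = n}.Nonempty :=
    ⟨_, v, hPv, rfl⟩
  obtain ⟨w, hw, hwcard⟩ := Nat.sInf_mem hNe
  have hmin : ∀ w', P w' →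
      (univ.filter fun i => w i ≠ 0).card ≤ (univ.filter fun i => w' i ≠ 0).card := by
    intro w' h
    rw [hwcard]; exact Nat.sInf_le ⟨w', h, rfl⟩
  obtain ⟨hw0, hwker, hwconf, hwsupp⟩ := hw
  obtain ⟨iw, hiw⟩ : ∃ i, w i ≠ 0 := by
    by_contra h
    push_neg at h
    exact hw0 (funext h)
  -- scale `w` to an integer vector with coprime entries
  set n : ℕ := ∏ i, (w i).den with hn
  have hnpos : 0 < n := Finset.prod_pos (fun i _ => (w i).pos)
  have hnQ : ((n : ℚ)) ≠ 0 := by exact_mod_cast hnpos.ne'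
  have hden : ∀ i, (w i).den ∣ n := fun i => Finset.dvd_prod_of_mem _ (mem_univ i)
  set z0 : Fin K → ℤ := fun i => (w i).num * ((n / (w i).den : ℕ) : ℤ) with hz0
  have hz0cast : ∀ i, ((z0 i : ℚ)) = w i * n := by
    intro i
    obtain ⟨d, hd⟩ := hden i
    have h1 : (n / (w i).den : ℕ) = d := by rw [hd, Nat.mul_div_cancel_left _ (w i).pos]
    have h2 : (n : ℚ) = ((w i).den : ℚ) * d := by rw [hd]; push_cast; ring
    simp only [hz0, h1]
    push_cast
    rw [h2, ← mul_assoc, Rat.mul_den_eq_num]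
  have hz0ne : z0 iw ≠ 0 := by
    intro h
    have h2 := hz0cast iw
    rw [h] at h2
    simp only [Int.cast_zero] at h2
    rcases mul_eq_zero.mp h2.symm with h' | h'
    · exact hiw h'
    · exact hnQ h'
  obtain ⟨z, hzdef, hzgcd⟩ :=
    Finset.extract_gcd z0 (⟨iw, mem_univ iw⟩ : (univ : Finset (Fin K)).Nonempty)
  set g : ℤ := univ.gcd z0 with hg
  have hgne : g ≠ 0 := fun h => hz0ne (Finset.gcd_eq_zero_iff.mp h iw (mem_univ iw))
  have hgnonneg : 0 ≤ g := by
    rw [hg, ← Finset.normalize_gcd, ← Int.abs_eq_normalize]; exact abs_nonneg _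
  have hgpos : 0 < g := lt_of_le_of_ne hgnonneg (Ne.symm hgne)
  set c : ℚ := (g : ℚ) / n with hc
  have hcpos : 0 < c := div_pos (by exact_mod_cast hgpos) (by exact_mod_cast hnpos)
  have hwz : ∀ i, w i = c * (z i : ℚ) := by
    intro i
    have h2 : w i * n = (g : ℚ) * (z i : ℚ) := by
      rw [← hz0cast i, hzdef i (mem_univ i)]; push_cast; ring
    rw [hc]
    field_simp
    linarith [h2]
  have hsuppwz : ∀ i, w i ≠ 0 ↔ z i ≠ 0 := by
    intro i
    rw [hwz i]
    constructor
    · intro h hz; exact h (by rw [hz]; simp)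
    · intro h hcz
      rcases mul_eq_zero.mp hcz with h' | h'
      · exact absurd h' hcpos.ne'
      · exact h (by exact_mod_cast h')
  have hzne : z ≠ 0 := fun h => ((hsuppwz iw).mp hiw) (by rw [h]; rfl)
  have hzkerQ : B.mulVec (fun i => (z i : ℚ)) = 0 := by
    have hwz' : w = c • (fun i => (z i : ℚ)) := funext fun i => by
      rw [hwz i]; rfl
    rw [hwz', Matrix.mulVec_smul] at hwker
    rcases smul_eq_zero.mp hwker with h | h
    · exact absurd h hcpos.ne'
    · exact h
  have hzker : A.mulVec z = 0 := by
    have h1 : (fun j => ((A.mulVec z) j : ℚ)) = 0 := by rw [← mulVec_cast A z]; exact hzkerQ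
    funext j
    have h2 := congrFun h1 j
    simp only [Pi.zero_apply] at h2
    exact_mod_cast h2
  -- key minimality claim
  have key : ∀ y' : Fin K → ℚ, B.mulVec y' = 0 → (∀ i, y' i ≠ 0 → w i ≠ 0) →
      ∀ i₂, 0 < y' i₂ * w i₂ → ∀ i, w i ≠ 0 → y' i ≠ 0 := by
    intro y' hy'ker hy'supp i₂ hi₂
    set S : Finset (Fin K) := univ.filter (fun i => 0 < y' i * w i) with hS
    have hSne : S.Nonempty := ⟨i₂, by simp [hS, hi₂]⟩
    obtain ⟨i1, hi1S, hi1min⟩ := Finset.exists_min_image S (fun i => w i / y' i) hSne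
    have hprod1 : 0 < y' i1 * w i1 := by simpa [hS] using hi1S
    have hy'i1 : y' i1 ≠ 0 := by
      intro h; rw [h, zero_mul] at hprod1; exact lt_irrefl _ hprod1
    set t : ℚ := w i1 / y' i1 with ht
    have htpos : 0 < t := by
      have h2 : (0:ℚ) < (y' i1)^2 := by positivity
      have h3 : t = (y' i1 * w i1) / (y' i1)^2 := by
        rw [ht]; field_simp
      rw [h3]; exact div_pos hprod1 h2
    set u' : Fin K → ℚ := fun i => w i - t * y' i with hu'
    have hu'ker : B.mulVec u' = 0 := by
      have he : u' = w - t • y' := funext fun i => by simp [hu', smul_eq_mul]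
      rw [he, Matrix.mulVec_sub, Matrix.mulVec_smul, hwker, hy'ker, smul_zero, sub_zero]
    have hzero_of : ∀ i, w i = 0 → u' i = 0 := by
      intro i hwi
      have hyi : y' i = 0 := by
        by_contra h2
        exact (hy'supp i h2) hwi
      simp [hu', hwi, hyi]
    have hu'suppv : ∀ i, v i = 0 → u' i = 0 := fun i hvi => hzero_of i (hwsupp i hvi)
    have hu'supp : ∀ i, u' i ≠ 0 → w i ≠ 0 := fun i h hwi => h (hzero_of i hwi)
    have hu'conf : ∀ i, 0 ≤ u' i * v i := by
      intro i
      by_cases hyi : y' i = 0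
      · have h2 : u' i = w i := by simp [hu', hyi]
        rw [h2]; exact hwconf i
      · have hwi : w i ≠ 0 := hy'supp i hyi
        have hww : 0 ≤ u' i * w i := by
          rcases lt_trichotomy (y' i * w i) 0 with h | h | h
          · have h2 : u' i * w i = w i * w i - t * (y' i * w i) := by
              simp only [hu']; ring
            nlinarith [mul_self_nonneg (w i)]
          · exact absurd h (mul_ne_zero hyi hwi)
          · have hiS : i ∈ S := by simp [hS, h]
            have hle : t ≤ w i / y' i := hi1min i hiS
            have heq : u' i = y' i * (w i / y' i - t) := by
              simp only [hu']; field_simp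
            rw [heq]
            have h3 : y' i * (w i / y' i - t) * w i = (w i / y' i - t) * (y' i * w i) := by ring
            rw [h3]
            exact mul_nonneg (by linarith) h.le
        exact sign_aux hww (hwconf i) hwi
    have hu'i1 : u' i1 = 0 := by
      simp only [hu', ht]
      field_simp; ring
    have hu'0 : u' = 0 := by
      by_contra h
      have hPu' : P u' := ⟨h, hu'ker, hu'conf, hu'suppv⟩
      have hcard := hmin u' hPu'
      have hsub : (univ.filter fun i => u' i ≠ 0) ⊆ (univ.filter fun i => w i ≠ 0) := by
        intro i hi
        rw [Finset.mem_filter] at hi ⊢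
        exact ⟨hi.1, hu'supp i hi.2⟩
      have hss : (univ.filter fun i => u' i ≠ 0) ⊂ (univ.filter fun i => w i ≠ 0) := by
        refine (Finset.ssubset_iff_of_subset hsub).mpr ⟨i1, ?_, ?_⟩
        · rw [Finset.mem_filter]
          refine ⟨mem_univ _, fun h2 => ?_⟩
          rw [h2, mul_zero] at hprod1
          exact lt_irrefl _ hprod1
        · rw [Finset.mem_filter]
          rintro ⟨-, h2⟩
          exact h2 hu'i1
      exact absurd hcard (not_le.2 (Finset.card_lt_card hss))
    intro i hwi hyi
    have h2 := congrFun hu'0 i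
    simp only [hu', Pi.zero_apply, hyi, mul_zero, sub_zero] at h2
    exact hwi h2
  have hzmin : ∀ y : Fin K → ℤ, y ≠ 0 → A.mulVec y = 0 →
      (∀ i, y i ≠ 0 → z i ≠ 0) → (∀ i, z i ≠ 0 → y i ≠ 0) := by
    intro y hy hyker hysupp
    have hy'ker : B.mulVec (fun i => (y i : ℚ)) = 0 := by
      rw [mulVec_cast A y, hyker]
      funext j; simp
    have hy'supp : ∀ i, ((y i : ℚ)) ≠ 0 → w i ≠ 0 := by
      intro i h
      have hyi : y i ≠ 0 := by exact_mod_cast h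
      exact (hsuppwz i).mpr (hysupp i hyi)
    obtain ⟨iy, hiy⟩ : ∃ i, y i ≠ 0 := by
      by_contra h; push_neg at h; exact hy (funext h)
    have hy'iy : ((y iy : ℚ)) ≠ 0 := by exact_mod_cast hiy
    have hwiy : w iy ≠ 0 := hy'supp iy hy'iy
    have hprodne : (y iy : ℚ) * w iy ≠ 0 := mul_ne_zero hy'iy hwiy
    intro i hzi
    have hwi : w i ≠ 0 := (hsuppwz i).mpr hzi
    rcases lt_or_gt_of_ne hprodne with hneg | hpos
    · have hnegker : B.mulVec (-(fun i => (y i : ℚ))) = 0 := by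
        rw [Matrix.mulVec_neg, hy'ker, neg_zero]
      have hnegsupp : ∀ j, (-(fun i => (y i : ℚ))) j ≠ 0 → w j ≠ 0 := by
        intro j h
        apply hy'supp j
        simpa using h
      have hneg' : 0 < (-(fun i => (y i : ℚ))) iy * w iy := by
        simp only [Pi.neg_apply, neg_mul]
        linarith
      have h2 : (-(fun i => (y i : ℚ))) i ≠ 0 := key _ hnegker hnegsupp iy hneg' i hwi
      simp only [Pi.neg_apply, neg_ne_zero] at h2
      exact_mod_cast h2
    · have h2 : ((y i : ℚ)) ≠ 0 := key _ hy'ker hy'supp iy hpos i hwi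
      exact_mod_cast h2
  refine ⟨z, ⟨hzne, hzker, hzgcd, hzmin⟩, ?_, ?_⟩
  · intro i
    have h2 : w i * v i = c * ((z i : ℚ) * v i) := by rw [hwz i]; ring
    have h3 := hwconf i
    rw [h2] at h3
    exact le_of_not_gt fun hlt => absurd h3 (not_le.2 (mul_neg_of_pos_of_neg hcpos hlt))
  · intro i hvi
    have h2 := hwsupp i hvi
    rw [hwz i] at h2
    rcases mul_eq_zero.mp h2 with h' | h'
    · exact absurd h' hcpos.ne'
    · exact_mod_cast h'

lemma decomp (A : Matrix (Fin p) (Fin K) ℤ) :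
    ∀ n : ℕ, ∀ v : Fin K → ℚ, (A.map ((↑) : ℤ → ℚ)).mulVec v = 0 →
    finrank ℚ (Wsub A v) ≤ n →
    ∃ m : ℕ, m ≤ n ∧ ∃ (c : Fin m → ℚ) (u : Fin m → Fin K → ℤ),
      (∀ j, 0 ≤ c j) ∧ (∀ j, IsCircuit A (u j)) ∧
      (∀ j i, 0 ≤ (u j i : ℚ) * v i) ∧
      (∀ j i, u j i ≠ 0 → v i ≠ 0) ∧
      (∀ i, v i = ∑ j, c j * (u j i : ℚ)) := by
  intro n
  induction n with
  | zero =>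
    intro v hker hrank
    have hv0 : v = 0 := by
      have hmem : v ∈ Wsub A v := ⟨hker, fun _ h => h⟩
      have hbot : Wsub A v = ⊥ := Submodule.finrank_eq_zero.mp (Nat.le_zero.mp hrank)
      rw [hbot, Submodule.mem_bot] at hmem
      exact hmem
    exact ⟨0, le_refl _, Fin.elim0, Fin.elim0, fun j => j.elim0, fun j => j.elim0,
      fun j => j.elim0, fun j => j.elim0, fun i => by simp [hv0]⟩
  | succ n ih =>
    intro v hker hrank
    by_cases hv0 : v = 0
    · exact ⟨0, Nat.zero_le _, Fin.elim0, Fin.elim0, fun j => j.elim0, fun j => j.elim0,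
        fun j => j.elim0, fun j => j.elim0, fun i => by simp [hv0]⟩
    · obtain ⟨u0, hu0circ, hu0conf, hu0supp⟩ := exists_conformal_circuit A v hv0 hker
      have hu0ne : u0 ≠ 0 := hu0circ.1
      obtain ⟨i₃, hi₃⟩ : ∃ i, u0 i ≠ 0 := by
        by_contra h; push_neg at h; exact hu0ne (funext h)
      set S : Finset (Fin K) := univ.filter (fun i => u0 i ≠ 0) with hS
      have hSne : S.Nonempty := ⟨i₃, by simp [hS, hi₃]⟩
      obtain ⟨i₀, hi₀S, hi₀min⟩ := Finset.exists_min_image S (fun i => v i / (u0 i : ℚ)) hSne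
      have hu0i₀ : u0 i₀ ≠ 0 := by simpa [hS] using hi₀S
      have hu0i₀Q : ((u0 i₀ : ℚ)) ≠ 0 := by exact_mod_cast hu0i₀
      have hvi₀ : v i₀ ≠ 0 := fun h => hu0i₀ (hu0supp i₀ h)
      have hprod₀ : 0 < (u0 i₀ : ℚ) * v i₀ :=
        lt_of_le_of_ne (hu0conf i₀) (Ne.symm (mul_ne_zero hu0i₀Q hvi₀))
      set t : ℚ := v i₀ / (u0 i₀ : ℚ) with ht
      have htpos : 0 < t := by
        have h2 : (0:ℚ) < ((u0 i₀ : ℚ))^2 := by positivity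
        have h3 : t = ((u0 i₀ : ℚ) * v i₀) / ((u0 i₀ : ℚ))^2 := by
          rw [ht]; field_simp
        rw [h3]; exact div_pos hprod₀ h2
      set v' : Fin K → ℚ := fun i => v i - t * (u0 i : ℚ) with hv'
      have hv'ker : (A.map ((↑) : ℤ → ℚ)).mulVec v' = 0 := by
        have he : v' = v - t • (fun i => (u0 i : ℚ)) := funext fun i => by
          simp [hv', smul_eq_mul]
        rw [he, Matrix.mulVec_sub, Matrix.mulVec_smul, hker, mulVec_cast A u0,
          hu0circ.2.1]
        funext j; simp
      have hv'supp : ∀ i, v i = 0 → v' i = 0 := by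
        intro i hvi
        simp [hv', hvi, hu0supp i hvi]
      have hv'conf : ∀ i, 0 ≤ v' i * v i := by
        intro i
        by_cases hui : u0 i = 0
        · have h2 : v' i = v i := by simp [hv', hui]
          rw [h2]; exact mul_self_nonneg _
        · have huiQ : ((u0 i : ℚ)) ≠ 0 := by exact_mod_cast hui
          have hiS : i ∈ S := by simp [hS, hui]
          have hle : t ≤ v i / (u0 i : ℚ) := hi₀min i hiS
          have heq : v' i = (u0 i : ℚ) * (v i / (u0 i : ℚ) - t) := by
            simp only [hv']; field_simp
          have hww : 0 ≤ v' i * (u0 i : ℚ) := by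
            rw [heq]
            have h3 : (u0 i : ℚ) * (v i / (u0 i : ℚ) - t) * (u0 i : ℚ)
                = (v i / (u0 i : ℚ) - t) * ((u0 i : ℚ) * (u0 i : ℚ)) := by ring
            rw [h3]
            exact mul_nonneg (by linarith) (mul_self_nonneg _)
          exact sign_aux hww (hu0conf i) huiQ
      have hv'i₀ : v' i₀ = 0 := by
        simp only [hv', ht]
        field_simp; ring
      have hle : Wsub A v' ≤ Wsub A v := by
        intro w hw
        exact ⟨hw.1, fun i hvi => hw.2 i (hv'supp i hvi)⟩
      have hmem : (fun i => (u0 i : ℚ)) ∈ Wsub A v := by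
        refine ⟨by rw [mulVec_cast A u0, hu0circ.2.1]; funext j; simp, fun i hvi => ?_⟩
        have h4 := hu0supp i hvi
        simp [h4]
      have hnmem : (fun i => (u0 i : ℚ)) ∉ Wsub A v' := by
        intro h
        exact hu0i₀Q (h.2 i₀ hv'i₀)
      have hlt : Wsub A v' < Wsub A v :=
        lt_of_le_of_ne hle (fun h => hnmem (h ▸ hmem))
      have hrank' : finrank ℚ (Wsub A v') ≤ n := by
        have h2 := Submodule.finrank_lt_finrank_of_lt hlt
        omega
      obtain ⟨m', hm', c', u', hc', hcirc', hconf', hsupp', hsum'⟩ := ih v' hv'ker hrank'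
      refine ⟨m' + 1, by omega, Fin.cons t c', Fin.cons u0 u', ?_, ?_, ?_, ?_, ?_⟩
      · intro j
        refine Fin.cases ?_ ?_ j
        · simpa using htpos.le
        · intro j'; simpa using hc' j'
      · intro j
        refine Fin.cases ?_ ?_ j
        · simpa using hu0circ
        · intro j'; simpa using hcirc' j'
      · intro j
        refine Fin.cases ?_ ?_ j
        · simpa using hu0conf
        · intro j' i
          simp only [Fin.cons_succ]
          by_cases h : u' j' i = 0
          · simp [h]
          · have hv'i : v' i ≠ 0 := hsupp' j' i h
            exact sign_aux (hconf' j' i) (hv'conf i) hv'i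
      · intro j
        refine Fin.cases ?_ ?_ j
        · intro i h
          simp only [Fin.cons_zero] at h
          exact fun hvi => hi₃.elim (by
            exact absurd (hu0supp i hvi) h)
        · intro j' i h hvi
          simp only [Fin.cons_succ] at h
          exact hsupp' j' i h (hv'supp i hvi)
      · intro i
        rw [Fin.sum_univ_succ]
        simp only [Fin.cons_zero, Fin.cons_succ]
        rw [← hsum' i]
        simp only [hv']
        ring
end Aux

/-- Every nonzero rational kernel vector of a full-row-rank p×K integer matrix A
can be written as a nonnegative rational combination of at most K−p circuits,
each sign-compatible with v and with support inside supp(v). -/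
theorem kernel_vector_conformal_circuit_decomposition {p K : ℕ}
    (A : Matrix (Fin p) (Fin K) ℤ) (hA : (A.map ((↑) : ℤ → ℚ)).rank = p)
    (v : Fin K → ℚ) (hv : v ≠ 0) (hker : (A.map ((↑) : ℤ → ℚ)).mulVec v = 0) :
    ∃ m : ℕ, m ≤ K - p ∧ ∃ (c : Fin m → ℚ) (u : Fin m → Fin K → ℤ),
      (∀ j, 0 ≤ c j) ∧ (∀ j, IsCircuit A (u j)) ∧
      (∀ j i, 0 ≤ (u j i : ℚ) * v i) ∧
      (∀ j i, u j i ≠ 0 → v i ≠ 0) ∧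
      (∀ i, v i = ∑ j, c j * (u j i : ℚ)) := by
  have hrk : finrank ℚ (LinearMap.ker (A.map ((↑) : ℤ → ℚ)).mulVecLin) = K - p := by
    have h1 := LinearMap.finrank_range_add_finrank_ker (A.map ((↑) : ℤ → ℚ)).mulVecLin
    have h2 : finrank ℚ (Fin K → ℚ) = K := by simp
    have h3 : finrank ℚ (LinearMap.range (A.map ((↑) : ℤ → ℚ)).mulVecLin) = p := hA
    omega
  have hW : finrank ℚ (Wsub A v) ≤ K - p := by
    have hle : Wsub A v ≤ LinearMap.ker (A.map ((↑) : ℤ → ℚ)).mulVecLin := by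
      intro w hw
      rw [LinearMap.mem_ker, Matrix.mulVecLin_apply]
      exact hw.1
    calc finrank ℚ (Wsub A v) ≤ finrank ℚ (LinearMap.ker (A.map ((↑) : ℤ → ℚ)).mulVecLin) :=
          Submodule.finrank_mono hle
      _ = K - p := hrk
  exact decomp A (K - p) v hker hW
end

section
/- Let X⁽²⁾ = (X⁽¹⁾ | X⁽ᵃ⁾) be a block-column partition of an n×p integer matrix. If u is a circuit of (X⁽²⁾)ᵀ, then either u is a circuit of (X⁽¹⁾)ᵀ, or there exists a circuit v of (X⁽¹⁾)ᵀ with supp(v) strictly contained in supp(u); in the latter case vᵀX⁽ᵃ⁾ ≠ 0. -/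
/-- Among nonzero kernel vectors with support contained in that of `w`, there is a
support-minimal one. -/
lemma exists_min_supp {α β : Type*} [Fintype α] [Fintype β] [DecidableEq β]
    (A : Matrix α β ℤ) :
    ∀ k : ℕ, ∀ w : β → ℤ, (Finset.univ.filter (fun i => w i ≠ 0)).card ≤ k →
      w ≠ 0 → A.mulVec w = 0 →
      ∃ v : β → ℤ, v ≠ 0 ∧ A.mulVec v = 0 ∧ (∀ i, v i ≠ 0 → w i ≠ 0) ∧
        ∀ v' : β → ℤ, v' ≠ 0 → A.mulVec v' = 0 → (∀ i, v' i ≠ 0 → v i ≠ 0) →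
          (∀ i, v i ≠ 0 → v' i ≠ 0) := by
  intro k
  induction k with
  | zero =>
    intro w hcard hw _
    exfalso
    apply hw
    funext i
    show w i = 0
    by_contra hi
    have : i ∈ Finset.univ.filter (fun i => w i ≠ 0) := by simp [hi]
    have := Finset.card_pos.mpr ⟨i, this⟩
    omega
  | succ k ih =>
    intro w hcard hw hker
    by_cases h : ∀ v' : β → ℤ, v' ≠ 0 → A.mulVec v' = 0 →
        (∀ i, v' i ≠ 0 → w i ≠ 0) → (∀ i, w i ≠ 0 → v' i ≠ 0)
    · exact ⟨w, hw, hker, fun _ hi => hi, h⟩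
    · push_neg at h
      obtain ⟨v', hv'ne, hv'ker, hsub, i, hwi, hv'i⟩ := h
      have hss : Finset.univ.filter (fun j => v' j ≠ 0) ⊂
          Finset.univ.filter (fun j => w j ≠ 0) := by
        refine ⟨fun j hj => ?_, fun hle => ?_⟩
        · simp only [Finset.mem_filter, Finset.mem_univ, true_and] at hj ⊢
          exact hsub j hj
        · have := hle (by simp [hwi] : i ∈ Finset.univ.filter (fun j => w j ≠ 0))
          simp only [Finset.mem_filter] at this
          exact this.2 hv'i
      have hcard' : (Finset.univ.filter (fun j => v' j ≠ 0)).card ≤ k := by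
        have := Finset.card_lt_card hss
        omega
      obtain ⟨v, hvne, hvker, hvsub, hvmin⟩ := ih v' hcard' hv'ne hv'ker
      exact ⟨v, hvne, hvker, fun j hj => hsub j (hvsub j hj), hvmin⟩

/-- For a block-column partition X⁽²⁾ = (X⁽¹⁾ | X⁽ᵃ⁾): every circuit u of (X⁽²⁾)ᵀ
either is a circuit of (X⁽¹⁾)ᵀ, or there is a circuit v of (X⁽¹⁾)ᵀ with support
strictly contained in supp(u); in the latter case vᵀX⁽ᵃ⁾ ≠ 0. -/
theorem circuit_restrict_model {n q r : ℕ} (X2 : Matrix (Fin n) (Fin q ⊕ Fin r) ℤ)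
    (u : Fin n → ℤ) (hu : IsCircuit X2.transpose u) :
    IsCircuit (X2.submatrix id Sum.inl).transpose u ∨
      ∃ v : Fin n → ℤ, IsCircuit (X2.submatrix id Sum.inl).transpose v ∧
        {i | v i ≠ 0} ⊂ {i | u i ≠ 0} ∧
        (X2.submatrix id Sum.inr).transpose.mulVec v ≠ 0 := by
  classical
  obtain ⟨hune, huker, hugcd, humin⟩ := hu
  -- kernel membership restricts
  have hker1 : ∀ w : Fin n → ℤ, X2.transpose.mulVec w = 0 →
      (X2.submatrix id Sum.inl).transpose.mulVec w = 0 := by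
    intro w hw
    funext j
    have := congrFun hw (Sum.inl j)
    simpa [Matrix.mulVec, Matrix.transpose, Matrix.submatrix, dotProduct] using this
  have huker1 := hker1 u huker
  by_cases hmin : ∀ v : Fin n → ℤ, v ≠ 0 →
      (X2.submatrix id Sum.inl).transpose.mulVec v = 0 →
      (∀ i, v i ≠ 0 → u i ≠ 0) → (∀ i, u i ≠ 0 → v i ≠ 0)
  · exact Or.inl ⟨hune, huker1, hugcd, hmin⟩
  · push_neg at hmin
    obtain ⟨w, hwne, hwker, hwsub, i0, hui0, hwi0⟩ := hmin
    -- get a support-minimal kernel vector inside supp w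
    obtain ⟨v, hvne, hvker, hvsub, hvmin⟩ :=
      exists_min_supp (X2.submatrix id Sum.inl).transpose
        (Finset.univ.filter (fun j => w j ≠ 0)).card w le_rfl hwne hwker
    -- normalize by gcd
    set g : ℤ := Finset.univ.gcd v with hg
    have hgne : g ≠ 0 := by
      intro h
      apply hvne
      funext j
      have := Finset.gcd_eq_zero_iff.mp (hg ▸ h) j (Finset.mem_univ j)
      simpa using this
    have hgdvd : ∀ j, g ∣ v j := fun j => Finset.gcd_dvd (Finset.mem_univ j)
    set v' : Fin n → ℤ := fun j => v j / g with hv'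
    have hmul : ∀ j, v j = g * v' j := fun j => (Int.mul_ediv_cancel' (hgdvd j)).symm
    have hsuppeq : ∀ j, v' j ≠ 0 ↔ v j ≠ 0 := by
      intro j
      constructor
      · intro h hj
        apply h; simp [hv', hj]
      · intro h hj
        apply h; rw [hmul j, hj, mul_zero]
    have hv'ne : v' ≠ 0 := by
      intro h
      apply hvne
      funext j
      have hj := congrFun h j
      simp only [Pi.zero_apply] at hj
      show v j = 0
      rw [hmul j, hj, mul_zero]
    have hv'ker : (X2.submatrix id Sum.inl).transpose.mulVec v' = 0 := by
      have hveq : v = g • v' := by funext j; simpa using hmul j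
      have := hvker
      rw [hveq, Matrix.mulVec_smul] at this
      funext j
      have := congrFun this j
      simp only [Pi.smul_apply, Pi.zero_apply, smul_eq_mul] at this
      rcases mul_eq_zero.mp this with h | h
      · exact absurd h hgne
      · exact h
    -- supp v' ⊊ supp u
    have hv'subu : ∀ j, v' j ≠ 0 → u j ≠ 0 := fun j hj => hwsub j (hvsub j ((hsuppeq j).mp hj))
    have hstrict : {i | v' i ≠ 0} ⊂ {i | u i ≠ 0} := by
      refine ⟨fun j hj => hv'subu j hj, fun hle => ?_⟩
      have : v' i0 ≠ 0 := hle hui0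
      exact hvsub i0 ((hsuppeq i0).mp this) hwi0
    -- v' is a circuit of X1ᵀ
    have hv'gcd : Finset.univ.gcd v' = 1 := by
      obtain ⟨j, hj⟩ : ∃ j, v j ≠ 0 := by
        by_contra h
        push_neg at h
        exact hvne (funext h)
      exact Finset.gcd_div_eq_one (Finset.mem_univ j) hj
    have hv'min : ∀ z : Fin n → ℤ, z ≠ 0 →
        (X2.submatrix id Sum.inl).transpose.mulVec z = 0 →
        (∀ i, z i ≠ 0 → v' i ≠ 0) → (∀ i, v' i ≠ 0 → z i ≠ 0) := by
      intro z hzne hzker hzsub i hi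
      exact hvmin z hzne hzker (fun j hj => (hsuppeq j).mp (hzsub j hj)) i ((hsuppeq i).mp hi)
    -- v'ᵀ Xᵃ ≠ 0
    have hXa : (X2.submatrix id Sum.inr).transpose.mulVec v' ≠ 0 := by
      intro h
      have hfull : X2.transpose.mulVec v' = 0 := by
        funext j
        cases j with
        | inl j =>
          have := congrFun hv'ker j
          simpa [Matrix.mulVec, Matrix.transpose, Matrix.submatrix, dotProduct] using this
        | inr j =>
          have := congrFun h j
          simpa [Matrix.mulVec, Matrix.transpose, Matrix.submatrix, dotProduct] using this
      -- contradicts minimality of u for X2ᵀ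
      have := humin v' hv'ne hfull hv'subu
      exact hstrict.2 (fun j hj => this j hj)
    exact Or.inr ⟨v', ⟨hv'ne, hv'ker, hv'gcd, hv'min⟩, hstrict, hXa⟩
end
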